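/- Let T be an isometry of a nondegenerate space (V,B) over a field F of characteristic different from 2. Suppose the minimal polynomial of T is q(X)^d · q*(X)^d, where q ∈ F[X] is monic irreducible with q(0) ≠ 0, q* is the dual polynomial of q, and q* ≠ q. Set W = ker q(T)^d and W* = ker q*(T)^d. Then V is the internal direct sum of W and W*, B vanishes identically on W and also on W* (both are totally isotropic), and dim W = dim W* = (dim V)/2. -/

import Mathlib

/-- The group of isometries of a bilinear space `(V, B)`, as a subgroup of the
group of linear automorphisms of `V`. -/
def isometryGroup (F : Type*) [Field F] {V : Type*} [AddCommGroup V] [Module F V]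
    (B : LinearMap.BilinForm F V) : Subgroup (V ≃ₗ[F] V) where
  carrier := {T | ∀ u v : V, B (T u) (T v) = B u v}
  one_mem' := by intro u v; rfl
  mul_mem' := by
    intro a b ha hb u v
    have h1 : (a * b) u = a (b u) := rfl
    have h2 : (a * b) v = a (b v) := rfl
    rw [h1, h2, ha, hb]
  inv_mem' := by
    intro a ha u v
    have h := ha (a⁻¹ u) (a⁻¹ v)
    have h1 : a (a⁻¹ u) = u := a.apply_symm_apply u
    have h2 : a (a⁻¹ v) = v := a.apply_symm_apply v
    rw [h1, h2] at h
    exact h.symm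


open Polynomial

/-- The dual of a polynomial `f` (with `f(0) ≠ 0`): `f*(X) = f(0)⁻¹ · Xⁿ · f(1/X)`,
i.e. `f(0)⁻¹` times the reverse of `f`. -/
noncomputable def dualPoly {F : Type*} [Field F] (f : Polynomial F) : Polynomial F :=
  Polynomial.C ((f.eval 0)⁻¹) * f.reverse

section Aux

variable {F : Type*} [Field F] {A : Type*} [Ring A] [Algebra F A]

lemma aux_pow_mul_pow {a b : A} (hba : b * a = 1) : ∀ k : ℕ, b ^ k * a ^ k = 1 := by
  intro k
  induction k with
  | zero => simp
  | succ n ih =>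
    rw [pow_succ b, pow_succ' a, mul_assoc, ← mul_assoc b a, hba, one_mul, ih]

lemma aux_reflect_aeval {a b : A} (hab : a * b = 1) (hba : b * a = 1)
    (N : ℕ) (f : Polynomial F) (hf : f.natDegree ≤ N) :
    aeval b (reflect N f) * a ^ N = aeval a f := by
  refine Polynomial.induction_with_natDegree_le
    (fun f => aeval b (reflect N f) * a ^ N = aeval a f) N ?_ ?_ ?_ f hf
  · simp
  · intro n r _ hnN
    rw [reflect_C_mul_X_pow, revAt_le hnN, map_mul, map_mul, aeval_C, aeval_C,
      aeval_X_pow, aeval_X_pow]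
    conv_lhs => rw [show a ^ N = a ^ (N - n) * a ^ n by
      rw [← pow_add, Nat.sub_add_cancel hnN]]
    rw [mul_assoc, ← mul_assoc (b ^ (N - n)), aux_pow_mul_pow hba, one_mul]
  · intro p q _ _ hp hq
    rw [reflect_add, map_add, add_mul, hp, hq, map_add]

lemma aux_adjoint {F V : Type*} [Field F] [AddCommGroup V] [Module F V]
    (B : LinearMap.BilinForm F V) (T : V ≃ₗ[F] V)
    (hT : ∀ u v : V, B (T u) (T v) = B u v) (p : Polynomial F) (u v : V) :
    B u (Polynomial.aeval ((T : V →ₗ[F] V) : Module.End F V) p v) =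
      B (Polynomial.aeval ((T.symm : V →ₗ[F] V) : Module.End F V) p u) v := by
  have hstep : ∀ u v : V, B u (T v) = B (T.symm u) v := by
    intro u v
    conv_lhs => rw [← T.apply_symm_apply u]
    exact hT _ _
  have hpow : ∀ (n : ℕ) (u v : V),
      B u ((((T : V →ₗ[F] V) : Module.End F V) ^ n) v) =
        B ((((T.symm : V →ₗ[F] V) : Module.End F V) ^ n) u) v := by
    intro n
    induction n with
    | zero => intro u v; simp
    | succ n ih =>
      intro u v
      rw [pow_succ' ((T : V →ₗ[F] V) : Module.End F V), pow_succ
        ((T.symm : V →ₗ[F] V) : Module.End F V), Module.End.mul_apply, Module.End.mul_apply]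
      have h1 : B u ((T : V →ₗ[F] V) ((((T : V →ₗ[F] V) : Module.End F V) ^ n) v)) =
          B (T.symm u) ((((T : V →ₗ[F] V) : Module.End F V) ^ n) v) := hstep _ _
      rw [h1, ih]
      rfl
  induction p using Polynomial.induction_on' with
  | add p q hp hq => simp [hp, hq]
  | monomial n a =>
    rw [aeval_monomial, aeval_monomial, Module.End.mul_apply, Module.End.mul_apply,
      Module.algebraMap_end_apply, Module.algebraMap_end_apply, map_smul,
      LinearMap.map_smul₂, hpow]

end Aux

/-- If the minimal polynomial of an isometry `T` is `q^d · (q*)^d` with `q`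
monic irreducible, `q(0) ≠ 0` and `q* ≠ q`, then `V` is the internal direct sum
of the totally isotropic subspaces `W = ker q(T)^d` and `W* = ker q*(T)^d`, each
of dimension `(dim V)/2`. -/
theorem dual_pair_decomposition
    (F : Type*) [Field F] (hchar : ringChar F ≠ 2)
    (V : Type*) [AddCommGroup V] [Module F V] [FiniteDimensional F V]
    (B : LinearMap.BilinForm F V) (hB : B.IsSymm ∨ B.IsAlt) (hnd : B.Nondegenerate)
    (T : V ≃ₗ[F] V) (hT : T ∈ isometryGroup F B)
    (q : Polynomial F) (hqm : q.Monic) (hqi : Irreducible q) (hq0 : q.eval 0 ≠ 0)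
    (hqd : dualPoly q ≠ q) (d : ℕ) (hd : 0 < d)
    (hmin : minpoly F ((T : V →ₗ[F] V) : Module.End F V) = q ^ d * (dualPoly q) ^ d)
    (W Wd : Submodule F V)
    (hW : W = LinearMap.ker ((Polynomial.aeval ((T : V →ₗ[F] V) : Module.End F V) q) ^ d))
    (hWd : Wd = LinearMap.ker
      ((Polynomial.aeval ((T : V →ₗ[F] V) : Module.End F V) (dualPoly q)) ^ d)) :
    IsCompl W Wd ∧
    (∀ u ∈ W, ∀ v ∈ W, B u v = 0) ∧
    (∀ u ∈ Wd, ∀ v ∈ Wd, B u v = 0) ∧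
    Module.finrank F W = Module.finrank F Wd ∧
    2 * Module.finrank F W = Module.finrank F V := by
  classical
  set T' : Module.End F V := ((T : V →ₗ[F] V) : Module.End F V) with hT'def
  set Ti : Module.End F V := ((T.symm : V →ₗ[F] V) : Module.End F V) with hTidef
  have hab : T' * Ti = 1 := by
    ext v; simp [hT'def, hTidef, Module.End.mul_apply]
  have hba : Ti * T' = 1 := by
    ext v; simp [hT'def, hTidef, Module.End.mul_apply]
  have hTiso : ∀ u v : V, B (T u) (T v) = B u v := hT
  set q0 : F := q.eval 0 with hq0def
  -- basic facts about the dual polynomial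
  have hntz : q.natTrailingDegree = 0 := by
    rw [Polynomial.natTrailingDegree_eq_zero]
    exact Or.inr (by rwa [Polynomial.coeff_zero_eq_eval_zero])
  have htc : q.trailingCoeff = q0 := by
    rw [Polynomial.trailingCoeff, hntz, Polynomial.coeff_zero_eq_eval_zero]
  have hdm : (dualPoly q).Monic := by
    unfold dualPoly Polynomial.Monic
    rw [Polynomial.leadingCoeff_mul, Polynomial.leadingCoeff_C,
      Polynomial.reverse_leadingCoeff, htc, inv_mul_cancel₀ hq0]
  have hddeg : (dualPoly q).natDegree = q.natDegree := by
    unfold dualPoly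
    rw [Polynomial.natDegree_C_mul (inv_ne_zero hq0), Polynomial.reverse_natDegree,
      hntz, Nat.sub_zero]
  have hdvd : ¬ q ∣ dualPoly q := by
    intro h
    exact hqd (Polynomial.eq_of_monic_of_dvd_of_natDegree_le hqm hdm h hddeg.le)
  have hcop : IsCoprime (q ^ d) ((dualPoly q) ^ d) :=
    ((hqi.coprime_iff_not_dvd.mpr hdvd).pow : _)
  set f : Polynomial F := q ^ d with hfdef
  set g : Polynomial F := (dualPoly q) ^ d with hgdef
  obtain ⟨a, b, hbez⟩ := hcop
  have h0 : Polynomial.aeval T' f * Polynomial.aeval T' g = 0 := by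
    have := minpoly.aeval F T'
    rw [hmin, map_mul] at this
    exact this
  have hW' : W = LinearMap.ker (Polynomial.aeval T' f) := by
    rw [hW, hfdef, map_pow]
  have hWd' : Wd = LinearMap.ker (Polynomial.aeval T' g) := by
    rw [hWd, hgdef, map_pow]
  have hsplit : ∀ v : V,
      Polynomial.aeval T' (a * f) v + Polynomial.aeval T' (b * g) v = v := by
    intro v
    rw [← LinearMap.add_apply, ← map_add, hbez, map_one, Module.End.one_apply]
  have hmemW : ∀ v : V, Polynomial.aeval T' (b * g) v ∈ W := by
    intro v
    rw [hW', LinearMap.mem_ker, ← Module.End.mul_apply, ← map_mul]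
    have h1 : f * (b * g) = b * (f * g) := by ring
    rw [h1, map_mul, map_mul, Module.End.mul_apply, h0, LinearMap.zero_apply, map_zero]
  have hmemWd : ∀ v : V, Polynomial.aeval T' (a * f) v ∈ Wd := by
    intro v
    rw [hWd', LinearMap.mem_ker, ← Module.End.mul_apply, ← map_mul]
    have h1 : g * (a * f) = a * (f * g) := by ring
    rw [h1, map_mul, map_mul, Module.End.mul_apply, h0, LinearMap.zero_apply, map_zero]
  have hcompl : IsCompl W Wd := by
    constructor
    · rw [disjoint_iff]
      rw [Submodule.eq_bot_iff]
      intro x hx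
      obtain ⟨hxW, hxWd⟩ := Submodule.mem_inf.mp hx
      have h1 : Polynomial.aeval T' (a * f) x = 0 := by
        rw [map_mul, Module.End.mul_apply, (hW' ▸ hxW : x ∈ LinearMap.ker _).out, map_zero]
      have h2 : Polynomial.aeval T' (b * g) x = 0 := by
        rw [map_mul, Module.End.mul_apply, (hWd' ▸ hxWd : x ∈ LinearMap.ker _).out, map_zero]
      have := hsplit x
      rw [h1, h2, add_zero] at this
      exact this.symm
    · rw [codisjoint_iff, eq_top_iff]
      intro v _
      exact Submodule.mem_sup.mpr ⟨Polynomial.aeval T' (b * g) v, hmemW v,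
        Polynomial.aeval T' (a * f) v, hmemWd v, by rw [add_comm]; exact hsplit v⟩
  -- adjoint identity
  have hadj : ∀ (p : Polynomial F) (u v : V),
      B u (Polynomial.aeval T' p v) = B (Polynomial.aeval Ti p u) v :=
    fun p u v => aux_adjoint B T hTiso p u v
  -- commutation
  have hcommTi : ∀ p : Polynomial F, Commute Ti (Polynomial.aeval T' p) := by
    intro p
    have h1 : Polynomial.aeval T' p * T' = T' * Polynomial.aeval T' p := by
      have e1 : Polynomial.aeval T' (p * X) = Polynomial.aeval T' p * T' := by
        rw [map_mul, Polynomial.aeval_X]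
      have e2 : Polynomial.aeval T' (X * p) = T' * Polynomial.aeval T' p := by
        rw [map_mul, Polynomial.aeval_X]
      rw [← e1, ← e2, mul_comm p X]
    show Ti * Polynomial.aeval T' p = Polynomial.aeval T' p * Ti
    calc Ti * Polynomial.aeval T' p
        = Ti * (Polynomial.aeval T' p * (T' * Ti)) := by rw [hab, mul_one]
      _ = Ti * ((Polynomial.aeval T' p * T') * Ti) := by rw [mul_assoc]
      _ = Ti * ((T' * Polynomial.aeval T' p) * Ti) := by rw [h1]
      _ = Ti * (T' * (Polynomial.aeval T' p * Ti)) := by rw [mul_assoc]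
      _ = (Ti * T') * (Polynomial.aeval T' p * Ti) := by rw [mul_assoc]
      _ = Polynomial.aeval T' p * Ti := by rw [hba, one_mul]
  -- generic vanishing lemma
  have hvanish : ∀ (E : Module.End F V) (c : F) (m : ℕ), Commute Ti E →
      ∀ u : V, (E ^ d) u = 0 → ((c • (E * Ti ^ m)) ^ d) u = 0 := by
    intro E c m hE u hu
    have hc : Commute E (Ti ^ m) := (hE.symm).pow_right m
    rw [_root_.smul_pow, hc.mul_pow, (hc.pow_pow d d).eq, LinearMap.smul_apply,
      Module.End.mul_apply, hu, map_zero, smul_zero]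
  -- reverse/dual evaluation identities
  set n : ℕ := q.natDegree with hndef
  have hrev : q.reverse = Polynomial.C q0 * dualPoly q := by
    rw [dualPoly, ← mul_assoc, ← Polynomial.C_mul, mul_inv_cancel₀ hq0,
      Polynomial.C_1, one_mul]
  have hrefl1 : Polynomial.aeval Ti q.reverse * T' ^ n = Polynomial.aeval T' q :=
    aux_reflect_aeval hab hba n q le_rfl
  have hrefl2 : Polynomial.aeval T' q.reverse * Ti ^ n = Polynomial.aeval Ti q :=
    aux_reflect_aeval hba hab n q le_rfl
  have hA1 : Polynomial.aeval Ti (dualPoly q) =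
      q0⁻¹ • (Polynomial.aeval T' q * Ti ^ n) := by
    have h1 : (q0 • Polynomial.aeval Ti (dualPoly q)) * T' ^ n
        = Polynomial.aeval T' q := by
      rw [← hrefl1, hrev, map_mul, Polynomial.aeval_C, Algebra.smul_def]
    have h2 : (q0 • Polynomial.aeval Ti (dualPoly q)) * (T' ^ n * Ti ^ n)
        = Polynomial.aeval T' q * Ti ^ n := by
      rw [← mul_assoc, h1]
    rw [aux_pow_mul_pow hab n, mul_one] at h2
    rw [← h2, smul_smul, inv_mul_cancel₀ hq0, one_smul]
  have hA2 : Polynomial.aeval Ti q =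
      q0 • (Polynomial.aeval T' (dualPoly q) * Ti ^ n) := by
    rw [← hrefl2, hrev, map_mul, Polynomial.aeval_C, Algebra.smul_def, mul_assoc]
  -- key vanishing facts
  have hkey1 : ∀ u ∈ W, Polynomial.aeval Ti g u = 0 := by
    intro u hu
    have hu' : ((Polynomial.aeval T' q) ^ d) u = 0 := by
      have := (hW ▸ hu : u ∈ LinearMap.ker ((Polynomial.aeval T' q) ^ d))
      exact this.out
    have : Polynomial.aeval Ti g = ((q0⁻¹ • (Polynomial.aeval T' q * Ti ^ n)) ^ d) := by
      rw [hgdef, map_pow, hA1]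
    rw [this]
    exact hvanish _ _ _ (hcommTi q) u hu'
  have hkey2 : ∀ u ∈ Wd, Polynomial.aeval Ti f u = 0 := by
    intro u hu
    have hu' : ((Polynomial.aeval T' (dualPoly q)) ^ d) u = 0 := by
      have := (hWd ▸ hu : u ∈ LinearMap.ker ((Polynomial.aeval T' (dualPoly q)) ^ d))
      exact this.out
    have : Polynomial.aeval Ti f = ((q0 • (Polynomial.aeval T' (dualPoly q) * Ti ^ n)) ^ d) := by
      rw [hfdef, map_pow, hA2]
    rw [this]
    exact hvanish _ _ _ (hcommTi (dualPoly q)) u hu'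
  -- isotropy of W
  have hisoW : ∀ u ∈ W, ∀ v ∈ W, B u v = 0 := by
    intro u hu v hv
    have h1 : Polynomial.aeval T' (a * f) v = 0 := by
      rw [map_mul, Module.End.mul_apply, (hW' ▸ hv : v ∈ LinearMap.ker _).out, map_zero]
    have h2 : v = Polynomial.aeval T' (b * g) v := by
      have := hsplit v; rw [h1, zero_add] at this; exact this.symm
    rw [h2, hadj, map_mul, Module.End.mul_apply, hkey1 u hu, map_zero,
      LinearMap.map_zero₂]
  have hisoWd : ∀ u ∈ Wd, ∀ v ∈ Wd, B u v = 0 := by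
    intro u hu v hv
    have h1 : Polynomial.aeval T' (b * g) v = 0 := by
      rw [map_mul, Module.End.mul_apply, (hWd' ▸ hv : v ∈ LinearMap.ker _).out, map_zero]
    have h2 : v = Polynomial.aeval T' (a * f) v := by
      have := hsplit v; rw [h1, add_zero] at this; exact this.symm
    rw [h2, hadj, map_mul, Module.End.mul_apply, hkey2 u hu, map_zero,
      LinearMap.map_zero₂]
  -- dimension count
  have hdual : ∀ (U U' : Submodule F V), IsCompl U U' →
      (∀ u ∈ U, ∀ v ∈ U, B u v = 0) →
      Module.finrank F U ≤ Module.finrank F U' := by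
    intro U U' hc hiso
    set φ : U →ₗ[F] Module.Dual F U' :=
      U'.subtype.dualMap.comp (LinearMap.comp B U.subtype) with hφ
    have hinj : Function.Injective φ := by
      rw [← LinearMap.ker_eq_bot, Submodule.eq_bot_iff]
      intro w hw
      have hw0 : (w : V) = 0 := by
        apply hnd.1
        intro m
        have hm : m ∈ U ⊔ U' := by rw [hc.sup_eq_top]; trivial
        obtain ⟨x, hx, y, hy, rfl⟩ := Submodule.mem_sup.mp hm
        have hBx : B (w : V) x = 0 := hiso _ w.2 _ hx
        have hBy : B (w : V) y = 0 := by
          have := LinearMap.congr_fun (LinearMap.mem_ker.mp hw) ⟨y, hy⟩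
          simpa [hφ] using this
        rw [map_add, hBx, hBy, add_zero]
      exact Subtype.ext hw0
    have := LinearMap.finrank_le_finrank_of_injective hinj
    rwa [Subspace.dual_finrank_eq] at this
  have hrank : Module.finrank F W = Module.finrank F Wd :=
    le_antisymm (hdual W Wd hcompl hisoW) (hdual Wd W hcompl.symm hisoWd)
  have hsum : Module.finrank F W + Module.finrank F Wd = Module.finrank F V :=
    Submodule.finrank_add_eq_of_isCompl hcompl
  refine ⟨hcompl, hisoW, hisoWd, hrank, ?_⟩
  rw [two_mul]
  rw [hrank] at hsum ⊢
  exact hsum
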